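/- Let α ∈ (0,∞) be badly approximable and define m̃_α(η) := sup_{t ∈ [−η, η]} |2 + e^{iπt} + e^{iπαt}|^{−1}. Then there exist c, C, η₀ > 0 such that c·η² ≤ m̃_α(η) ≤ C·η² for all η ≥ η₀. -/

import Mathlib

/-- The function `m̃_α(η) = sup_{t ∈ [-η, η]} |2 + e^{iπt} + e^{iπαt}|⁻¹`. -/
noncomputable def mTilde (α η : ℝ) : ℝ :=
  ⨆ t : Set.Icc (-η) η,
    (‖2 + Complex.exp (Real.pi * ((t : ℝ) : ℂ) * Complex.I)
      + Complex.exp (Real.pi * (α : ℂ) * ((t : ℝ) : ℂ) * Complex.I)‖)⁻¹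

open Real

namespace MTproof

noncomputable def cfX (α : ℝ) : ℕ → ℝ
  | 0 => α
  | n+1 => (Int.fract (cfX α n))⁻¹

noncomputable def cfA (α : ℝ) (n : ℕ) : ℤ := ⌊cfX α n⌋

noncomputable def cfPQ (α : ℝ) : ℕ → ℤ × ℤ
  | 0 => (1, 0)
  | 1 => (cfA α 0, 1)
  | n+2 => (cfA α (n+1) * (cfPQ α (n+1)).1 + (cfPQ α n).1,
            cfA α (n+1) * (cfPQ α (n+1)).2 + (cfPQ α n).2)

noncomputable def cfP (α : ℝ) (n : ℕ) : ℤ := (cfPQ α n).1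
noncomputable def cfQ (α : ℝ) (n : ℕ) : ℤ := (cfPQ α n).2

lemma fract_irrational {x : ℝ} (h : Irrational x) : Irrational (Int.fract x) := by
  have := Irrational.sub_intCast h ⌊x⌋
  rw [Int.fract]
  exact this

lemma cfX_irrational {α : ℝ} (hirr : Irrational α) : ∀ n, Irrational (cfX α n)
  | 0 => hirr
  | n+1 => by
      have h2 : Irrational (Int.fract (cfX α n)) :=
        fract_irrational (cfX_irrational hirr n)
      show Irrational (Int.fract (cfX α n))⁻¹
      exact h2.inv

lemma cfX_fract_pos {α : ℝ} (hirr : Irrational α) (n : ℕ) : 0 < Int.fract (cfX α n) := by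
  rcases lt_or_eq_of_le (Int.fract_nonneg (cfX α n)) with h | h
  · exact h
  · exfalso
    have h2 : Irrational (Int.fract (cfX α n)) :=
      fract_irrational (cfX_irrational hirr n)
    have h3 : Int.fract (cfX α n) ≠ ((0:ℤ):ℝ) := h2.ne_int 0
    simp at h3
    exact h3 h.symm

lemma one_lt_cfX {α : ℝ} (hirr : Irrational α) (n : ℕ) : 1 < cfX α (n+1) := by
  have h1 : 0 < Int.fract (cfX α n) := cfX_fract_pos hirr n
  have h2 : Int.fract (cfX α n) < 1 := Int.fract_lt_one _
  have : 1 < (Int.fract (cfX α n))⁻¹ := (one_lt_inv₀ h1).mpr h2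
  exact this

lemma cfX_pos {α : ℝ} (hirr : Irrational α) (n : ℕ) : 0 < cfX α (n+1) :=
  lt_trans one_pos (one_lt_cfX hirr n)

lemma one_le_cfA {α : ℝ} (hirr : Irrational α) (n : ℕ) : 1 ≤ cfA α (n+1) := by
  have := one_lt_cfX hirr n
  exact Int.le_floor.mpr (by exact_mod_cast this.le)

lemma cfX_succ_inv {α : ℝ} (n : ℕ) : (cfX α (n+1))⁻¹ = cfX α n - cfA α n := by
  show ((Int.fract (cfX α n))⁻¹)⁻¹ = _
  rw [inv_inv, Int.fract, cfA]

-- P/Q recurrences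
lemma cfP_zero (α : ℝ) : cfP α 0 = 1 := rfl
lemma cfQ_zero (α : ℝ) : cfQ α 0 = 0 := rfl
lemma cfP_one (α : ℝ) : cfP α 1 = cfA α 0 := rfl
lemma cfQ_one (α : ℝ) : cfQ α 1 = 1 := rfl
lemma cfP_rec (α : ℝ) (n : ℕ) :
    cfP α (n+2) = cfA α (n+1) * cfP α (n+1) + cfP α n := rfl
lemma cfQ_rec (α : ℝ) (n : ℕ) :
    cfQ α (n+2) = cfA α (n+1) * cfQ α (n+1) + cfQ α n := rfl

lemma cfQ_ge_one {α : ℝ} (hirr : Irrational α) : ∀ n, 1 ≤ cfQ α (n+1)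
  | 0 => le_refl 1
  | n+1 => by
      rw [cfQ_rec]
      have h1 := cfQ_ge_one hirr n
      have h2 := one_le_cfA hirr n
      have h3 : 0 ≤ cfQ α n := by
        cases n with
        | zero => simp [cfQ_zero]
        | succ m => exact le_trans zero_le_one (cfQ_ge_one hirr m)
      nlinarith

lemma cfQ_nonneg {α : ℝ} (hirr : Irrational α) : ∀ n, 0 ≤ cfQ α n
  | 0 => le_refl 0
  | n+1 => le_trans zero_le_one (cfQ_ge_one hirr n)

lemma cfQ_growth {α : ℝ} (hirr : Irrational α) : ∀ n : ℕ, (n : ℤ) ≤ cfQ α (n+1)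
  | 0 => by simp [cfQ_one]
  | n+1 => by
      rw [cfQ_rec]
      have h1 := cfQ_growth hirr n
      have h2 := one_le_cfA hirr n
      have h3 : 0 ≤ cfQ α n := cfQ_nonneg hirr n
      have h4 : 1 ≤ cfQ α (n+1) := cfQ_ge_one hirr n
      have h5 : (n:ℤ) ≤ cfQ α (n+1) := h1
      cases n with
      | zero => simp [cfQ_zero, cfQ_one] at *; nlinarith
      | succ m =>
          have h6 : 1 ≤ cfQ α (m+1) := cfQ_ge_one hirr m
          push_cast at h5 ⊢
          nlinarith [mul_le_mul_of_nonneg_right h2 (le_trans zero_le_one h4)]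

lemma cfQ_mono {α : ℝ} (hirr : Irrational α) (n : ℕ) : cfQ α (n+1) ≤ cfQ α (n+2) := by
  rw [cfQ_rec]
  have h2 := one_le_cfA hirr n
  have h3 : 0 ≤ cfQ α n := cfQ_nonneg hirr n
  have h4 : 1 ≤ cfQ α (n+1) := cfQ_ge_one hirr n
  nlinarith

-- determinant
lemma cfDet {α : ℝ} : ∀ n, cfP α (n+1) * cfQ α n - cfP α n * cfQ α (n+1) = (-1)^(n+1)
  | 0 => by simp [cfP_one, cfQ_zero, cfP_zero, cfQ_one]
  | n+1 => by
      rw [cfP_rec, cfQ_rec]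
      have h := cfDet (α := α) n
      ring_nf
      ring_nf at h
      nlinarith [h]

end MTproof

namespace MTproof2
open MTproof

noncomputable def cfE (α : ℝ) (n : ℕ) : ℝ := α * cfQ α n - cfP α n

lemma cfI {α : ℝ} (hirr : Irrational α) :
    ∀ n, α * (cfX α (n+1) * cfQ α (n+1) + cfQ α n)
      = cfX α (n+1) * cfP α (n+1) + cfP α n
  | 0 => by
      have hf : Int.fract (cfX α 0) ≠ 0 := ne_of_gt (cfX_fract_pos hirr 0)
      have h1 : (Int.fract (cfX α 0))⁻¹ * Int.fract (cfX α 0) = 1 := inv_mul_cancel₀ hf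
      have hx : cfX α 1 = (Int.fract (cfX α 0))⁻¹ := rfl
      have hx0 : cfX α 0 = α := rfl
      have hfr : Int.fract (cfX α 0) = α - (⌊α⌋ : ℝ) := rfl
      rw [hfr] at h1
      rw [cfP_one, cfP_zero, cfQ_one, cfQ_zero, hx, hfr]
      have hA : cfA α 0 = ⌊α⌋ := rfl
      rw [hA]
      push_cast
      linear_combination h1
  | n+1 => by
      have IH := cfI hirr n
      have hx2 : cfX α (n+2) ≠ 0 := ne_of_gt (cfX_pos hirr (n+1))
      have hinv := cfX_succ_inv (α := α) (n+1)
      have hmul : cfX α (n+2) * (cfX α (n+1) - cfA α (n+1)) = 1 := by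
        rw [← hinv]; field_simp
      rw [cfP_rec, cfQ_rec]
      push_cast
      linear_combination (cfX α (n+2)) * IH + ((cfP α (n+1) : ℝ) - α * cfQ α (n+1)) * hmul

lemma cfE_rec {α : ℝ} (hirr : Irrational α) (n : ℕ) :
    cfX α (n+1) * cfE α (n+1) = - cfE α n := by
  have := cfI hirr n
  unfold cfE
  linear_combination this

lemma cfE_ne {α : ℝ} (hirr : Irrational α) : ∀ n, cfE α n ≠ 0
  | 0 => by unfold cfE; simp [cfQ_zero, cfP_zero]
  | n+1 => by
      intro h
      have h2 := cfE_rec hirr n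
      rw [h, mul_zero] at h2
      exact cfE_ne hirr n (by linarith)

lemma cfE_bound {α : ℝ} (hirr : Irrational α) (n : ℕ) :
    |cfE α (n+1)| * (cfQ α (n+2) : ℝ) ≤ 1 := by
  have det := cfDet (α := α) (n+1)
  have hdet : |(cfP α (n+2) : ℝ) * cfQ α (n+1) - (cfP α (n+1) : ℝ) * cfQ α (n+2)| = 1 := by
    have h1 : ((cfP α (n+2) * cfQ α (n+1) - cfP α (n+1) * cfQ α (n+2) : ℤ) : ℝ)
        = (((-1)^(n+2) : ℤ) : ℝ) := by exact_mod_cast congrArg (fun z : ℤ => (z : ℝ)) det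
    push_cast at h1
    rw [h1, abs_pow, abs_neg, abs_one, one_pow]
  have hx2 : 0 < cfX α (n+2) := cfX_pos hirr (n+1)
  have hq1 : (0:ℝ) ≤ (cfQ α (n+1) : ℝ) := by exact_mod_cast cfQ_nonneg hirr (n+1)
  have hq2 : (0:ℝ) ≤ (cfQ α (n+2) : ℝ) := by exact_mod_cast cfQ_nonneg hirr (n+2)
  have hE2 := cfE_rec hirr (n+1)
  have key : cfX α (n+2) * ((cfP α (n+2) : ℝ) * cfQ α (n+1) - (cfP α (n+1) : ℝ) * cfQ α (n+2))
      = cfE α (n+1) * (cfX α (n+2) * cfQ α (n+2) + cfQ α (n+1)) := by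
    unfold cfE at hE2 ⊢
    linear_combination (-(cfQ α (n+1) : ℝ)) * hE2
  have h3 : |cfE α (n+1)| * (cfX α (n+2) * cfQ α (n+2) + cfQ α (n+1)) = cfX α (n+2) := by
    have hnn : 0 ≤ cfX α (n+2) * cfQ α (n+2) + cfQ α (n+1) := by positivity
    calc |cfE α (n+1)| * (cfX α (n+2) * cfQ α (n+2) + cfQ α (n+1))
        = |cfE α (n+1) * (cfX α (n+2) * cfQ α (n+2) + cfQ α (n+1))| := by
          rw [abs_mul, abs_of_nonneg hnn]
      _ = |cfX α (n+2) * ((cfP α (n+2) : ℝ) * cfQ α (n+1) - (cfP α (n+1) : ℝ) * cfQ α (n+2))| := by rw [key]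
      _ = cfX α (n+2) := by rw [abs_mul, hdet, abs_of_pos hx2, mul_one]
  nlinarith [abs_nonneg (cfE α (n+1)), mul_nonneg (abs_nonneg (cfE α (n+1))) hq1]

end MTproof2

namespace MTproof3
open MTproof MTproof2

lemma odd_iff_zmod (x : ℤ) : Odd x ↔ (x : ZMod 2) = 1 := by
  constructor
  · intro hx
    have h0 : ¬ ((x : ZMod 2) = 0) := by
      intro hc
      have := (ZMod.intCast_zmod_eq_zero_iff_dvd x 2).mp hc
      rw [Int.odd_iff] at hx
      omega
    have h1 : ∀ z : ZMod 2, ¬ z = 0 → z = 1 := by decide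
    exact h1 _ h0
  · intro hx
    rw [Int.odd_iff]
    by_contra hcon
    have hdvd : ((2:ℕ):ℤ) ∣ x := by push_cast; omega
    have h0 := (ZMod.intCast_zmod_eq_zero_iff_dvd x 2).mpr hdvd
    rw [h0] at hx
    exact absurd hx (by decide)

lemma parity_trick (a b c d : ℤ) (h : ¬ (2 ∣ (a*d - c*b))) :
    (Odd a ∧ Odd b) ∨ (Odd c ∧ Odd d) ∨ (Odd (a+c) ∧ Odd (b+d)) := by
  have key := odd_iff_zmod
  have hz : ((a : ZMod 2) * d - (c : ZMod 2) * b) = 1 := by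
    have h0 : ¬ ((a*d - c*b : ℤ) : ZMod 2) = 0 := by
      intro hc
      exact h (by exact_mod_cast (ZMod.intCast_zmod_eq_zero_iff_dvd _ 2).mp hc)
    have h1 : ∀ z : ZMod 2, ¬ z = 0 → z = 1 := by decide
    have := h1 _ h0
    push_cast at this
    exact this
  have main : ∀ a b c d : ZMod 2, a*d - c*b = 1 →
      (a = 1 ∧ b = 1) ∨ (c = 1 ∧ d = 1) ∨ (a + c = 1 ∧ b + d = 1) := by decide
  rcases main _ _ _ _ hz with ⟨h1, h2⟩ | ⟨h1, h2⟩ | ⟨h1, h2⟩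
  · exact Or.inl ⟨(key a).mpr h1, (key b).mpr h2⟩
  · exact Or.inr (Or.inl ⟨(key c).mpr h1, (key d).mpr h2⟩)
  · refine Or.inr (Or.inr ⟨(key _).mpr ?_, (key _).mpr ?_⟩) <;> push_cast <;> assumption

lemma irrational_of_bad {α : ℝ} (c₀ : ℝ) (hc : 0 < c₀)
    (hbad : ∀ p q : ℤ, q ≠ 0 → c₀/(q:ℝ)^2 ≤ |α - p/q|) : Irrational α := by
  rw [Irrational]
  intro ⟨r, hr⟩
  have hden : ((r.den : ℤ) : ℝ) ≠ 0 := by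
    exact_mod_cast r.den_nz
  have := hbad r.num (r.den : ℤ) (by exact_mod_cast r.den_nz)
  rw [← hr] at this
  rw [show (r:ℝ) = (r.num : ℝ)/((r.den:ℤ):ℝ) by push_cast [Rat.cast_def]; ring, sub_self, abs_zero] at this
  have h2 : 0 < c₀ / ((r.den:ℤ):ℝ)^2 := by positivity
  linarith

lemma bad' {α : ℝ} (c₀ : ℝ) (hc : 0 < c₀)
    (hbad : ∀ p q : ℤ, q ≠ 0 → c₀/(q:ℝ)^2 ≤ |α - p/q|) :
    ∀ p q : ℤ, q ≠ 0 → c₀ / |(q:ℝ)| ≤ |α * q - p| := by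
  intro p q hq
  have hq' : ((q:ℝ)) ≠ 0 := by exact_mod_cast hq
  have h1 := hbad p q hq
  have h2 : |α - p/q| = |α * q - p| / |(q:ℝ)| := by
    rw [← abs_div]
    congr 1
    field_simp
  rw [h2] at h1
  have hq2 : 0 < |(q:ℝ)| := abs_pos.mpr hq'
  have hq2' : (0:ℝ) < (q:ℝ)^2 := by rw [← sq_abs]; exact pow_pos hq2 2
  rw [div_le_div_iff₀ hq2' hq2] at h1
  rw [div_le_iff₀ hq2]
  have habs1 : 1 ≤ |(q:ℝ)| := by
    rw [show |(q:ℝ)| = ((|q| : ℤ) : ℝ) by push_cast; rfl]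
    exact_mod_cast Int.one_le_abs hq
  nlinarith [abs_nonneg (α * (q:ℝ) - p), sq_abs ((q:ℝ))]
  
end MTproof3

namespace MTproof4
open MTproof MTproof2 MTproof3

lemma exists_odd_pair {α : ℝ} (c₀ : ℝ) (hc : 0 < c₀)
    (hbad : ∀ p q : ℤ, q ≠ 0 → c₀/(q:ℝ)^2 ≤ |α - (p:ℝ)/(q:ℝ)|) :
    ∃ B₀ : ℝ, 0 < B₀ ∧ ∀ B : ℝ, B₀ ≤ B → ∃ n m : ℤ, Odd n ∧ Odd m ∧ 0 < n ∧
      (n:ℝ) ≤ B ∧ |α * n - m| ≤ (4/c₀)/B := by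
  have hirr : Irrational α := irrational_of_bad c₀ hc hbad
  have hbad' := bad' c₀ hc hbad
  have hQnn : ∀ k, (0:ℝ) ≤ (cfQ α k : ℝ) := fun k => by exact_mod_cast cfQ_nonneg hirr k
  have hQ1 : ∀ k, (1:ℝ) ≤ (cfQ α (k+1) : ℝ) := fun k => by exact_mod_cast cfQ_ge_one hirr k
  refine ⟨2 * ((cfQ α 2 : ℤ) : ℝ) + 2, by nlinarith [hQ1 1], ?_⟩
  intro B hB
  have hB2 : 2 ≤ B := by nlinarith [hQ1 1]
  have hBpos : 0 < B := by linarith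
  -- find j with Q (j+1) ≤ B/2 < Q (j+2)
  have hex : ∃ k : ℕ, B/2 < (cfQ α (k+3) : ℝ) := by
    refine ⟨⌈B/2⌉₊, ?_⟩
    have h1 : (⌈B/2⌉₊ : ℤ) + 2 ≤ cfQ α (⌈B/2⌉₊ + 3) := by
      have := cfQ_growth hirr (⌈B/2⌉₊ + 2)
      push_cast at this ⊢
      linarith
    have h2 : B/2 ≤ (⌈B/2⌉₊ : ℝ) := Nat.le_ceil _
    have h3 : ((⌈B/2⌉₊ : ℤ) : ℝ) + 2 ≤ (cfQ α (⌈B/2⌉₊ + 3) : ℝ) := by exact_mod_cast h1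
    push_cast at h3
    linarith
  classical
  let k₀ := Nat.find hex
  have hupper : B/2 < (cfQ α (k₀+3) : ℝ) := Nat.find_spec hex
  have hlow : (cfQ α (k₀+2) : ℝ) ≤ B/2 := by
    rcases Nat.eq_zero_or_pos k₀ with h0 | h0
    · rw [show k₀ + 2 = 2 by rw [h0]]
      linarith
    · obtain ⟨k', hk'⟩ := Nat.exists_eq_succ_of_ne_zero (Nat.pos_iff_ne_zero.mp h0)
      have := Nat.find_min hex (show k' < k₀ by omega) 
      rw [show k₀ + 2 = k' + 3 by rw [hk']]
      linarith [not_lt.mp this]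
  set j := k₀ + 1 with hj
  -- error bounds
  have hEj : |cfE α j| * (cfQ α (j+1) : ℝ) ≤ 1 := cfE_bound hirr k₀
  have hEj1 : |cfE α (j+1)| * (cfQ α (j+2) : ℝ) ≤ 1 := cfE_bound hirr (k₀+1)
  have hQj1_pos : (1:ℝ) ≤ (cfQ α (j+1) : ℝ) := hQ1 _
  have hQj2_pos : (1:ℝ) ≤ (cfQ α (j+2) : ℝ) := hQ1 _
  have hQmono : (cfQ α (j+1) : ℝ) ≤ (cfQ α (j+2) : ℝ) := by
    exact_mod_cast cfQ_mono hirr j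
  -- badly approximable gives Q(j+1) ≥ c₀ B / 2
  have hQne : cfQ α (j+1) ≠ 0 := by
    have := cfQ_ge_one hirr j; omega
  have hb := hbad' (cfP α (j+1)) (cfQ α (j+1)) hQne
  have habsQ : |(cfQ α (j+1) : ℝ)| = (cfQ α (j+1) : ℝ) := abs_of_pos (by linarith)
  rw [habsQ] at hb
  have hEj1_eq : |α * (cfQ α (j+1) : ℝ) - (cfP α (j+1) : ℝ)| = |cfE α (j+1)| := rfl
  rw [hEj1_eq] at hb
  -- from hb : c₀ / Q(j+1) ≤ |E(j+1)| and hEj1 : |E(j+1)| * Q(j+2) ≤ 1 :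
  have hQbig : c₀ * B / 2 ≤ (cfQ α (j+1) : ℝ) := by
    have h1 : c₀ / (cfQ α (j+1) : ℝ) * (cfQ α (j+2) : ℝ) ≤ 1 := by
      calc c₀ / (cfQ α (j+1) : ℝ) * (cfQ α (j+2) : ℝ)
          ≤ |cfE α (j+1)| * (cfQ α (j+2) : ℝ) := by
            apply mul_le_mul_of_nonneg_right hb (by linarith)
        _ ≤ 1 := hEj1
    rw [div_mul_eq_mul_div, div_le_one (by linarith)] at h1
    -- h1 : c₀ * Q(j+2) ≤ Q(j+1) ; and Q(j+2) > B/2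
    nlinarith
  -- the three candidates
  have hdet := cfDet (α := α) j
  have hodd : ¬ ((2:ℤ) ∣ (cfP α j * cfQ α (j+1) - cfP α (j+1) * cfQ α j)) := by
    intro hdvd
    have h1 : cfP α j * cfQ α (j+1) - cfP α (j+1) * cfQ α j = -((-1:ℤ)^(j+1)) := by
      linarith [hdet]
    rcases Nat.even_or_odd (j+1) with he | ho
    · rw [he.neg_one_pow] at h1; rw [h1] at hdvd; omega
    · rw [ho.neg_one_pow] at h1; rw [h1] at hdvd; omega
  have hcB : (0:ℝ) < c₀ * B := by positivity
  have hEjb : |cfE α j| * (c₀ * B) ≤ 2 := by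
    have h2 := mul_le_mul_of_nonneg_left hQbig (abs_nonneg (cfE α j))
    nlinarith [hEj]
  have hEj1b : |cfE α (j+1)| * (c₀ * B) ≤ 2 := by
    have h2 := mul_le_mul_of_nonneg_left hQbig (abs_nonneg (cfE α (j+1)))
    have h3 : |cfE α (j+1)| * (cfQ α (j+1) : ℝ) ≤ 1 := by
      calc |cfE α (j+1)| * (cfQ α (j+1) : ℝ) ≤ |cfE α (j+1)| * (cfQ α (j+2) : ℝ) :=
            mul_le_mul_of_nonneg_left hQmono (abs_nonneg _)
        _ ≤ 1 := hEj1
    nlinarith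
  have hQjpos : (1:ℤ) ≤ cfQ α j := cfQ_ge_one hirr k₀
  have hQj1posZ : (1:ℤ) ≤ cfQ α (j+1) := cfQ_ge_one hirr j
  have hQjR : (cfQ α j : ℝ) ≤ B/2 := by
    have h1 : (cfQ α j : ℝ) ≤ (cfQ α (j+1) : ℝ) := by exact_mod_cast cfQ_mono hirr k₀
    linarith
  have hQj1R : (cfQ α (j+1) : ℝ) ≤ B/2 := hlow
  rcases parity_trick (cfP α j) (cfQ α j) (cfP α (j+1)) (cfQ α (j+1)) hodd with
    ⟨hm, hn⟩ | ⟨hm, hn⟩ | ⟨hm, hn⟩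
  · refine ⟨cfQ α j, cfP α j, hn, hm, by omega, by linarith, ?_⟩
    have he : α * (cfQ α j : ℝ) - (cfP α j : ℝ) = cfE α j := rfl
    rw [he, div_div, le_div_iff₀ hcB]
    linarith
  · refine ⟨cfQ α (j+1), cfP α (j+1), hn, hm, by omega, by linarith, ?_⟩
    have he : α * (cfQ α (j+1) : ℝ) - (cfP α (j+1) : ℝ) = cfE α (j+1) := rfl
    rw [he, div_div, le_div_iff₀ hcB]
    linarith
  · refine ⟨cfQ α j + cfQ α (j+1), cfP α j + cfP α (j+1), hn, hm, by omega, ?_, ?_⟩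
    · push_cast; linarith
    · have he : α * ((cfQ α j + cfQ α (j+1) : ℤ) : ℝ) - ((cfP α j + cfP α (j+1) : ℤ) : ℝ)
          = cfE α j + cfE α (j+1) := by
        unfold MTproof2.cfE; push_cast; ring
      rw [he, div_div, le_div_iff₀ hcB]
      have habs := abs_add_le (cfE α j) (cfE α (j+1))
      have h4 : |cfE α j + cfE α (j+1)| * (c₀ * B) ≤ (|cfE α j| + |cfE α (j+1)|) * (c₀ * B) :=
        mul_le_mul_of_nonneg_right habs (le_of_lt hcB)
      nlinarith

end MTproof4

open Real

namespace MTanalytic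

noncomputable def FF (α t : ℝ) : ℂ :=
  2 + Complex.exp ((Real.pi : ℂ) * (t : ℂ) * Complex.I)
    + Complex.exp ((Real.pi : ℂ) * (α : ℂ) * (t : ℂ) * Complex.I)

lemma exists_nearest_odd (x : ℝ) : ∃ n : ℤ, Odd n ∧ |x - n| ≤ 1 := by
  refine ⟨2 * round ((x-1)/2) + 1, ⟨round ((x-1)/2), by ring⟩, ?_⟩
  have h := abs_sub_round ((x-1)/2)
  have h2 : x - ((2 * round ((x-1)/2) + 1 : ℤ) : ℝ) = 2 * ((x-1)/2 - round ((x-1)/2)) := by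
    push_cast; ring
  rw [h2, abs_mul]
  rw [abs_of_pos (by norm_num : (0:ℝ) < 2)]
  linarith

lemma core_cos {s : ℝ} (h : |s| ≤ 1) : 2 * s^2 ≤ 1 - Real.cos (π * s) := by
  set u := |s| with hu
  have hu0 : 0 ≤ u := abs_nonneg s
  have hcoseq : Real.cos (π * s) = Real.cos (π * u) := by
    rw [show π * u = |π * s| by rw [abs_mul, abs_of_pos pi_pos], Real.cos_abs]
  rw [hcoseq]
  have hdbl : Real.cos (π * u) = Real.cos (π*u/2)^2 - Real.sin (π*u/2)^2 := by
    have := Real.cos_two_mul' (π*u/2)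
    rw [show 2 * (π*u/2) = π * u by ring] at this
    exact this
  have hpyth := Real.sin_sq_add_cos_sq (π*u/2)
  have hjordan : u ≤ Real.sin (π*u/2) := by
    have := Real.mul_le_sin (x := π*u/2) (by positivity) (by nlinarith [pi_pos])
    calc u = 2/π * (π*u/2) := by field_simp
      _ ≤ Real.sin (π*u/2) := this
  have hsq : u^2 ≤ Real.sin (π*u/2)^2 := by nlinarith
  have hs2 : s^2 = u^2 := (sq_abs s).symm
  nlinarith

lemma one_add_cos_ge {x : ℝ} {n : ℤ} (hodd : Odd n) (h : |x - n| ≤ 1) :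
    2 * (x - n)^2 ≤ 1 + Real.cos (π * x) := by
  obtain ⟨k, hk⟩ := hodd
  have hx : π * x = (π*(x - n) + π) + (k : ℝ) * (2*π) := by
    rw [hk]; push_cast; ring
  rw [hx, Real.cos_add_int_mul_two_pi, Real.cos_add_pi]
  have := core_cos h
  linarith

lemma FF_re (α t : ℝ) : (FF α t).re = 2 + Real.cos (π*t) + Real.cos (π*(α*t)) := by
  unfold FF
  rw [show ((π:ℂ) * (t:ℂ) * Complex.I) = ((π*t : ℝ) : ℂ) * Complex.I by push_cast; ring,
    show ((π:ℂ) * (α:ℂ) * (t:ℂ) * Complex.I) = ((π*(α*t) : ℝ) : ℂ) * Complex.I by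
      push_cast; ring]
  rw [Complex.add_re, Complex.add_re, Complex.exp_ofReal_mul_I_re,
    Complex.exp_ofReal_mul_I_re]
  norm_num

lemma pointwise_upper {α c₀ : ℝ} (hpos : 0 < α) (hc : 0 < c₀)
    (hbad' : ∀ p q : ℤ, q ≠ 0 → c₀ / |(q:ℝ)| ≤ |α * q - p|)
    {η t : ℝ} (hη : 1 ≤ η) (ht : |t| ≤ η) :
    (‖FF α t‖)⁻¹ ≤ (4*(α+1)^2/c₀^2) * η^2 := by
  obtain ⟨n, hnodd, hn⟩ := exists_nearest_odd t
  obtain ⟨m, hmodd, hm⟩ := exists_nearest_odd (α * t)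
  have hnne : n ≠ 0 := by rintro rfl; exact (Int.not_odd_iff_even.mpr Even.zero) hnodd
  have hlb := hbad' m n hnne
  set d₁ := |t - n| with hd₁
  set d₂ := |α * t - m| with hd₂
  have hd₁0 : 0 ≤ d₁ := abs_nonneg _
  have hd₂0 : 0 ≤ d₂ := abs_nonneg _
  -- |αn - m| ≤ α d₁ + d₂
  have htri : |α * n - m| ≤ α * d₁ + d₂ := by
    have : α * (n:ℝ) - m = α * ((n:ℝ) - t) + (α * t - m) := by ring
    rw [this]
    calc |α * ((n:ℝ) - t) + (α * t - m)| ≤ |α * ((n:ℝ) - t)| + |α * t - m| := abs_add_le _ _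
      _ = α * d₁ + d₂ := by
          rw [abs_mul, abs_of_pos hpos, abs_sub_comm]
  -- |n| ≤ 2η
  have hnbound : |(n:ℝ)| ≤ 2 * η := by
    calc |(n:ℝ)| = |(n:ℝ) - t + t| := by ring_nf
      _ ≤ |(n:ℝ) - t| + |t| := abs_add_le _ _
      _ ≤ 1 + η := by rw [abs_sub_comm]; exact add_le_add hn ht
      _ ≤ 2 * η := by linarith
  have hnpos : 0 < |(n:ℝ)| := by
    rw [abs_pos]; exact_mod_cast hnne
  -- c₀ / (2η) ≤ (α+1)(d₁+d₂)
  have hkey : c₀ / (2 * η) ≤ (α+1) * (d₁ + d₂) := by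
    have h1 : c₀ / (2*η) ≤ c₀ / |(n:ℝ)| := by
      apply div_le_div_of_nonneg_left (le_of_lt hc) hnpos hnbound
    calc c₀ / (2*η) ≤ c₀ / |(n:ℝ)| := h1
      _ ≤ |α * n - m| := hlb
      _ ≤ α * d₁ + d₂ := htri
      _ ≤ (α+1) * (d₁ + d₂) := by nlinarith
  -- real part lower bound
  have hre : (c₀ / (2*(α+1)*η))^2 ≤ (FF α t).re := by
    rw [FF_re]
    have h1 := one_add_cos_ge hnodd hn
    have h2 := one_add_cos_ge hmodd hm
    have h3 : (d₁ + d₂)^2 ≤ 2*d₁^2 + 2*d₂^2 := by nlinarith [sq_nonneg (d₁ - d₂)]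
    have h4 : c₀ / (2*(α+1)*η) = (c₀ / (2*η)) / (α+1) := by
      rw [div_div]; congr 1; ring
    have h5 : c₀ / (2*(α+1)*η) ≤ d₁ + d₂ := by
      rw [h4, div_le_iff₀ (by linarith : (0:ℝ) < α+1)]
      linarith [hkey]
    have h6 : (c₀ / (2*(α+1)*η))^2 ≤ (d₁ + d₂)^2 := by
      apply pow_le_pow_left₀ (by positivity) h5
    have h7 : d₁^2 = (t - n)^2 := sq_abs _
    have h8 : d₂^2 = (α*t - m)^2 := sq_abs _
    nlinarith
  have habs : (c₀ / (2*(α+1)*η))^2 ≤ ‖FF α t‖ :=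
    le_trans hre (Complex.re_le_norm _)
  have hppos : (0:ℝ) < (c₀ / (2*(α+1)*η))^2 := by positivity
  have hinv : (‖FF α t‖)⁻¹ ≤ ((c₀ / (2*(α+1)*η))^2)⁻¹ :=
    inv_anti₀ hppos habs
  calc (‖FF α t‖)⁻¹ ≤ ((c₀ / (2*(α+1)*η))^2)⁻¹ := hinv
    _ = (4*(α+1)^2/c₀^2) * η^2 := by
        have hc' : c₀ ≠ 0 := ne_of_gt hc
        have ha' : α + 1 ≠ 0 := by positivity
        have hη' : η ≠ 0 := by positivity
        field_simp
        ring

end MTanalytic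

namespace MTanalytic2
open MTanalytic

lemma exp_odd (δ : ℝ) (n : ℤ) (hn : Odd n) :
    Complex.exp ((((π * (n + δ) : ℝ)) : ℂ) * Complex.I)
      = -Complex.exp (((π * δ : ℝ) : ℂ) * Complex.I) := by
  obtain ⟨k, hk⟩ := hn
  have h : (((π * ((n:ℝ) + δ) : ℝ)) : ℂ) * Complex.I
      = ((π * δ : ℝ) : ℂ) * Complex.I + (π : ℂ) * Complex.I + (k : ℂ) * (2 * (π:ℂ) * Complex.I) := by
    rw [hk]; push_cast; ring
  rw [h, Complex.exp_add, Complex.exp_add, Complex.exp_pi_mul_I,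
    Complex.exp_int_mul_two_pi_mul_I]
  ring

lemma FF_special {α : ℝ} {n m : ℤ} (hn : Odd n) (hm : Odd m) {t δ : ℝ}
    (ht : t = n + δ) (ht2 : α * t = m + -δ) :
    FF α t = ((2 - 2 * Real.cos (π * δ) : ℝ) : ℂ) := by
  unfold FF
  have e1 : (π : ℂ) * (t : ℂ) * Complex.I = (((π * ((n:ℝ) + δ) : ℝ)) : ℂ) * Complex.I := by
    rw [ht]; push_cast; ring
  have e2 : (π : ℂ) * (α : ℂ) * (t : ℂ) * Complex.I
      = (((π * ((m:ℝ) + -δ) : ℝ)) : ℂ) * Complex.I := by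
    have : (α : ℂ) * (t : ℂ) = ((m : ℝ) + -δ : ℝ) := by
      rw [← ht2]; push_cast; ring
    push_cast at this ⊢
    rw [show (π:ℂ) * ↑α * ↑t * Complex.I = (π:ℂ) * (↑α * ↑t) * Complex.I by ring, this]
  rw [e1, e2, exp_odd δ n hn, exp_odd (-δ) m hm]
  rw [show (π * -δ : ℝ) = -(π * δ) by ring]
  rw [show ((-(π * δ) : ℝ) : ℂ) * Complex.I = -(((π * δ : ℝ) : ℂ)) * Complex.I by push_cast; ring]
  rw [Complex.exp_mul_I, Complex.exp_mul_I]
  rw [Complex.cos_neg, Complex.sin_neg]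
  rw [← Complex.ofReal_cos]
  push_cast
  ring

end MTanalytic2

set_option maxHeartbeats 2000000 in
open Real MTproof MTproof2 MTproof3 MTproof4 MTanalytic MTanalytic2 in
/-- For badly approximable `α > 0`, the function `m̃_α` grows exactly quadratically. -/
theorem mTilde_quadratic_of_badly_approximable (α : ℝ) (hpos : 0 < α)
    (hbad : ∃ c₀ : ℝ, 0 < c₀ ∧ ∀ p q : ℤ, q ≠ 0 →
      c₀ / (q : ℝ) ^ 2 ≤ |α - (p : ℝ) / (q : ℝ)|) :
    ∃ c C η₀ : ℝ, 0 < c ∧ 0 < C ∧ 0 < η₀ ∧ ∀ η : ℝ, η₀ ≤ η →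
      c * η ^ 2 ≤ mTilde α η ∧ mTilde α η ≤ C * η ^ 2 := by
  obtain ⟨c₀, hc, hbad⟩ := hbad
  have hπ := Real.pi_pos
  have hbad' := bad' c₀ hc hbad
  obtain ⟨B₀, hB₀, hNT⟩ := exists_odd_pair c₀ hc hbad
  have h4c : (0:ℝ) < 4/c₀ := by positivity
  refine ⟨(α+1)^2 * c₀^2 / (64*π^2), 4*(α+1)^2/c₀^2, B₀ + 4/c₀ + 2,
    div_pos (mul_pos (pow_pos (by linarith) 2) (pow_pos hc 2)) (by nlinarith),
    div_pos (by nlinarith) (pow_pos hc 2), by linarith, ?_⟩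
  intro η hη
  have hη2 : 2 ≤ η := by linarith
  have hη1 : 1 ≤ η := by linarith
  have hηpos : 0 < η := by linarith
  have hne : Nonempty (Set.Icc (-η) η) := ⟨⟨0, by constructor <;> linarith⟩⟩
  have hmeq : mTilde α η
      = ⨆ t : Set.Icc (-η) η, (‖FF α (t:ℝ)‖)⁻¹ := rfl
  have hub : ∀ t : Set.Icc (-η) η,
      (‖FF α (t:ℝ)‖)⁻¹ ≤ (4*(α+1)^2/c₀^2) * η^2 := by
    rintro ⟨t, ht1, ht2⟩
    exact pointwise_upper hpos hc hbad' hη1 (abs_le.mpr ⟨by linarith, ht2⟩)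
  constructor
  · -- lower bound
    set B := η - 1 with hBdef
    have hB : B₀ ≤ B := by linarith
    obtain ⟨n, m, hnodd, hmodd, hnpos, hnB, herr⟩ := hNT B hB
    set θ : ℝ := α * (n:ℝ) - (m:ℝ) with hθdef
    have hnne : n ≠ 0 := by omega
    have hθpos : 0 < |θ| := by
      have h3 := hbad' m n hnne
      rw [← hθdef] at h3
      have h2 : 0 < c₀ / |(n:ℝ)| := by
        have h4 : (0:ℝ) < |(n:ℝ)| := abs_pos.mpr (by exact_mod_cast hnne)
        positivity
      linarith
    have hθne : θ ≠ 0 := abs_pos.mp hθpos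
    have hBc : 4/c₀ ≤ B := by linarith
    have hB2 : η/2 ≤ B := by linarith
    have hBpos : 0 < B := by linarith
    have hθB : |θ| ≤ (4/c₀)/B := herr
    have hδbound1 : (4/c₀)/B ≤ 1 := by rw [div_le_one hBpos]; exact hBc
    have h1α : (0:ℝ) < 1 + α := by linarith
    set δ : ℝ := -θ/(1+α) with hδdef
    have hδabs : |δ| ≤ |θ| := by
      rw [hδdef, abs_div, abs_neg]
      have h5 : 1 ≤ |1+α| := by rw [abs_of_pos h1α]; linarith
      calc |θ| / |1+α| ≤ |θ| / 1 := by
            apply div_le_div_of_nonneg_left (abs_nonneg θ) one_pos h5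
        _ = |θ| := div_one _
    have hδ1 : |δ| ≤ 1 := le_trans hδabs (le_trans hθB hδbound1)
    have hδne : δ ≠ 0 := by
      rw [hδdef]
      intro h
      rcases div_eq_zero_iff.mp h with h' | h'
      · exact hθne (by linarith [neg_eq_zero.mp h'])
      · linarith
    set t₀ : ℝ := (n:ℝ) + δ with ht₀def
    have hαt₀ : α * t₀ = (m:ℝ) + -δ := by
      rw [ht₀def, hδdef, hθdef]
      field_simp
      ring
    have hδmem := abs_le.mp hδ1
    have hn1 : (1:ℝ) ≤ (n:ℝ) := by exact_mod_cast hnpos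
    have hmem : t₀ ∈ Set.Icc (-η) η := by
      constructor
      · rw [ht₀def]; linarith
      · rw [ht₀def]; linarith
    have hFF := FF_special hnodd hmodd ht₀def hαt₀
    have hcos1 := Real.cos_le_one (π*δ)
    have hval : ‖FF α t₀‖ = 2 - 2*Real.cos (π*δ) := by
      rw [hFF, Complex.norm_real, Real.norm_eq_abs, abs_of_nonneg (by linarith)]
    have hcore := core_cos hδ1
    have hδsq : 0 < δ^2 := by
      have h6 : δ^2 ≠ 0 := pow_ne_zero 2 hδne
      exact lt_of_le_of_ne (sq_nonneg δ) (Ne.symm h6)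
    have hposval : 0 < 2 - 2*Real.cos (π*δ) := by nlinarith
    have hupcos : 2 - 2*Real.cos (π*δ) ≤ π^2 * δ^2 := by
      have h7 := Real.one_sub_sq_div_two_le_cos (x := π*δ)
      nlinarith
    have hXpos : 0 < π^2 * δ^2 := mul_pos (pow_pos hπ 2) hδsq
    have hδ2eq : δ^2 = θ^2/(1+α)^2 := by rw [hδdef, div_pow, neg_sq]
    have hθ2 : θ^2 ≤ 64/(c₀^2*η^2) := by
      have h8 : |θ| ≤ 8/(c₀*η) := by
        calc |θ| ≤ (4/c₀)/B := hθB
          _ ≤ 8/(c₀*η) := by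
              rw [div_div, div_le_div_iff₀ (by positivity) (by positivity)]
              nlinarith
      calc θ^2 = |θ|^2 := (sq_abs θ).symm
        _ ≤ (8/(c₀*η))^2 := pow_le_pow_left₀ (abs_nonneg θ) h8 2
        _ = 64/(c₀^2*η^2) := by rw [div_pow]; congr 1 <;> ring
    have hprod : ((α+1)^2 * c₀^2/(64*π^2)) * η^2 * (π^2*δ^2) ≤ 1 := by
      have heq : ((α+1)^2 * c₀^2/(64*π^2)) * η^2 * (π^2*δ^2) = c₀^2*η^2*θ^2/64 := by
        rw [hδ2eq]
        have hπne : π ≠ 0 := ne_of_gt hπ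
        have h1αne : (1:ℝ) + α ≠ 0 := ne_of_gt h1α
        field_simp
        ring
      rw [heq]
      have h9 := mul_le_mul_of_nonneg_left hθ2 (show (0:ℝ) ≤ c₀^2*η^2 by positivity)
      have h10 : c₀^2*η^2*(64/(c₀^2*η^2)) = 64 := by
        field_simp
      rw [h10] at h9
      rw [div_le_one (by norm_num : (0:ℝ) < 64)]
      exact h9
    have hlow1 : ((α+1)^2*c₀^2/(64*π^2)) * η^2 ≤ (π^2*δ^2)⁻¹ := by
      rw [inv_eq_one_div, le_div_iff₀ hXpos]
      exact hprod
    have hlow2 : (π^2*δ^2)⁻¹ ≤ (2 - 2*Real.cos (π*δ))⁻¹ := inv_anti₀ hposval hupcos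
    have hbdd : BddAbove (Set.range (fun t : Set.Icc (-η) η =>
        (‖FF α (t:ℝ)‖)⁻¹)) := by
      refine ⟨(4*(α+1)^2/c₀^2) * η^2, ?_⟩
      rintro y ⟨t, rfl⟩
      exact hub t
    have hle := le_ciSup hbdd (⟨t₀, hmem⟩ : Set.Icc (-η) η)
    rw [hmeq]
    calc (α+1)^2*c₀^2/(64*π^2) * η^2 ≤ (π^2*δ^2)⁻¹ := hlow1
      _ ≤ (2-2*Real.cos (π*δ))⁻¹ := hlow2
      _ = (‖FF α t₀‖)⁻¹ := by rw [hval]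
      _ ≤ _ := hle
  · rw [hmeq]
    exact ciSup_le hub
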